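/- Let n ≥ 3 be an integer and fix a sign σ ∈ {+1, −1}. A differentiable function f : (1,∞) → ℝ satisfies the ordinary differential equation f'(x) − ((n−1)/x) f(x) = σ √(x^{n−2}/(x^{n−2}−1)) for all x > 1 if and only if there exists λ ∈ ℝ such that f(x) = (2/(n−2)) (λ + σ √((x^{n−2}−1)/x^{n−2})) x^{n−1} for all x > 1. -/

import Mathlib

lemma aux_sqrt_deriv (m : ℕ) (hm : 1 ≤ m) (σ : ℝ) {x : ℝ} (hx : 1 < x) :
    HasDerivAt (fun y : ℝ => 2 / (m : ℝ) * σ * Real.sqrt ((y ^ m - 1) / y ^ m))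
      (σ * Real.sqrt (x ^ m / (x ^ m - 1)) / x ^ (m + 1)) x := by
  have hx0 : (0 : ℝ) < x := lt_trans one_pos hx
  have hxm : (1 : ℝ) < x ^ m := one_lt_pow₀ hx (by omega)
  have hxm0 : x ^ m ≠ 0 := by positivity
  have hu : (0 : ℝ) < 1 - (x ^ m)⁻¹ := by
    rw [sub_pos, inv_lt_one_iff₀]; right; exact hxm
  have h1 : HasDerivAt (fun y : ℝ => (y ^ m)⁻¹)
      (-((m : ℝ) * x ^ (m - 1)) / (x ^ m) ^ 2) x := (hasDerivAt_pow m x).inv hxm0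
  have h2 : HasDerivAt (fun y : ℝ => 1 - (y ^ m)⁻¹)
      ((m : ℝ) * x ^ (m - 1) / (x ^ m) ^ 2) x := by
    simpa [neg_div] using h1.const_sub (1 : ℝ)
  have h3 := (h2.sqrt hu.ne').const_mul (2 / (m : ℝ) * σ)
  have heq : (fun y : ℝ => 2 / (m : ℝ) * σ * Real.sqrt ((y ^ m - 1) / y ^ m))
      =ᶠ[nhds x] (fun y : ℝ => 2 / (m : ℝ) * σ * Real.sqrt (1 - (y ^ m)⁻¹)) := by
    filter_upwards [isOpen_Ioi.mem_nhds (show x ∈ Set.Ioi (0 : ℝ) from hx0)] with y hy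
    have : y ^ m ≠ 0 := pow_ne_zero _ (ne_of_gt hy)
    rw [sub_div, div_self this, one_div]
  have h4 := h3.congr_of_eventuallyEq heq
  refine h4.congr_deriv ?_
  symm
  have hs : (0 : ℝ) < Real.sqrt (1 - (x ^ m)⁻¹) := Real.sqrt_pos.2 hu
  have hsqrt : Real.sqrt (x ^ m / (x ^ m - 1)) = (Real.sqrt (1 - (x ^ m)⁻¹))⁻¹ := by
    rw [← Real.sqrt_inv]
    congr 1
    field_simp
  have hpow : x ^ (m - 1) * x ^ (m + 1) = (x ^ m) ^ 2 := by
    rw [← pow_add, ← pow_mul]; congr 1; omega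
  rw [hsqrt]
  have hm0 : (m : ℝ) ≠ 0 := by positivity
  generalize Real.sqrt (1 - (x ^ m)⁻¹) = s at hs ⊢
  field_simp
  ring_nf
  rw [show m * 2 = (m - 1) + (m + 1) by omega, pow_add]
  ring

/-- Let `n ≥ 3` be an integer and fix a sign `σ ∈ {+1, −1}`. A differentiable
function `f : (1,∞) → ℝ` satisfies `f'(x) − ((n−1)/x) f(x) = σ √(x^(n−2)/(x^(n−2)−1))`
for all `x > 1` if and only if there exists `λ ∈ ℝ` such that
`f(x) = (2/(n−2)) (λ + σ √((x^(n−2)−1)/x^(n−2))) x^(n−1)` for all `x > 1`. -/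
theorem ode_general_solution (n : ℕ) (hn : 3 ≤ n) (σ : ℝ) (hσ : σ = 1 ∨ σ = -1)
    (f : ℝ → ℝ) (hf : ∀ x ∈ Set.Ioi (1 : ℝ), DifferentiableAt ℝ f x) :
    (∀ x ∈ Set.Ioi (1 : ℝ),
        deriv f x - ((n : ℝ) - 1) / x * f x
          = σ * Real.sqrt (x ^ (n - 2) / (x ^ (n - 2) - 1)))
      ↔ ∃ l : ℝ, ∀ x ∈ Set.Ioi (1 : ℝ),
          f x = 2 / ((n : ℝ) - 2)
              * (l + σ * Real.sqrt ((x ^ (n - 2) - 1) / x ^ (n - 2))) * x ^ (n - 1) := by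
  set m := n - 2 with hm_def
  have hm1 : 1 ≤ m := by omega
  have hn1 : n - 1 = m + 1 := by omega
  have hcast2 : ((n : ℝ) - 2) = (m : ℝ) := by
    rw [hm_def]; push_cast [Nat.cast_sub (by omega : 2 ≤ n)]; ring
  have hcast1 : ((n : ℝ) - 1) = (m : ℝ) + 1 := by
    rw [hm_def]; push_cast [Nat.cast_sub (by omega : 2 ≤ n)]; ring
  have hm0 : (m : ℝ) ≠ 0 := by positivity
  simp only [hn1, hcast1, hcast2]
  constructor
  · intro hode
    set F : ℝ → ℝ := fun y => f y / y ^ (m + 1)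
      - 2 / (m : ℝ) * σ * Real.sqrt ((y ^ m - 1) / y ^ m) with hF
    have hFderiv : ∀ x ∈ Set.Ioi (1 : ℝ), HasDerivAt F 0 x := by
      intro x hx
      have hx1 : (1 : ℝ) < x := hx
      have hx0 : (0 : ℝ) < x := lt_trans one_pos hx1
      have hxp : x ^ (m + 1) ≠ 0 := by positivity
      have hq : HasDerivAt (fun y => f y / y ^ (m + 1))
          ((deriv f x * x ^ (m + 1) - f x * ((m + 1 : ℕ) * x ^ m)) / (x ^ (m + 1)) ^ 2) x := by
        simpa using ((hf x hx).hasDerivAt).fun_div (hasDerivAt_pow (m + 1) x) hxp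
      have hsub := hq.fun_sub (aux_sqrt_deriv m hm1 σ hx1)
      refine hsub.congr_deriv ?_
      symm
      have h := hode x hx
      have hder : deriv f x = σ * Real.sqrt (x ^ m / (x ^ m - 1)) + ((m : ℝ) + 1) / x * f x := by
        linarith
      generalize Real.sqrt (x ^ m / (x ^ m - 1)) = t at hder ⊢
      rw [hder]
      push_cast
      field_simp
      ring
    refine ⟨(m : ℝ) / 2 * F 2, fun x hx => ?_⟩
    have hFx : F x = F 2 := by
      refine (convex_Ioi (1 : ℝ)).is_const_of_fderivWithin_eq_zero
        (fun y hy => ((hFderiv y hy).differentiableAt).differentiableWithinAt)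
        (fun y hy => ?_) hx (by norm_num)
      rw [fderivWithin_of_isOpen isOpen_Ioi hy]
      have := (hFderiv y hy).hasFDerivAt.fderiv
      rw [this]
      ext
      simp
    have hx0 : (0 : ℝ) < x := lt_trans one_pos hx
    have hxp : x ^ (m + 1) ≠ 0 := by positivity
    have : f x / x ^ (m + 1) = F 2 + 2 / (m : ℝ) * σ * Real.sqrt ((x ^ m - 1) / x ^ m) := by
      rw [← hFx, hF]; ring
    rw [div_eq_iff hxp] at this
    generalize Real.sqrt ((x ^ m - 1) / x ^ m) = s at this ⊢
    rw [this]
    field_simp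
  · rintro ⟨l, hl⟩ x hx
    have hx1 : (1 : ℝ) < x := hx
    have hx0 : (0 : ℝ) < x := lt_trans one_pos hx1
    have heut : f =ᶠ[nhds x]
        (fun y => 2 / (m : ℝ) * (l + σ * Real.sqrt ((y ^ m - 1) / y ^ m)) * y ^ (m + 1)) :=
      Filter.eventuallyEq_of_mem (isOpen_Ioi.mem_nhds hx) hl
    have h1 := aux_sqrt_deriv m hm1 σ hx1
    have h2 : HasDerivAt (fun y => 2 / (m : ℝ) * (l + σ * Real.sqrt ((y ^ m - 1) / y ^ m)))
        (σ * Real.sqrt (x ^ m / (x ^ m - 1)) / x ^ (m + 1)) x := by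
      have := (hasDerivAt_const x (2 / (m : ℝ) * l)).fun_add h1
      have hfe : (fun y => 2 / (m : ℝ) * (l + σ * Real.sqrt ((y ^ m - 1) / y ^ m)))
          = (fun y => 2 / (m : ℝ) * l + 2 / (m : ℝ) * σ * Real.sqrt ((y ^ m - 1) / y ^ m)) := by
        funext y; ring
      rw [hfe]
      simpa using this
    have hd := h2.fun_mul (hasDerivAt_pow (m + 1) x)
    have hderiv : deriv f x = σ * Real.sqrt (x ^ m / (x ^ m - 1)) / x ^ (m + 1) * x ^ (m + 1)
        + 2 / (m : ℝ) * (l + σ * Real.sqrt ((x ^ m - 1) / x ^ m)) * ((m + 1 : ℕ) * x ^ m) := by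
      rw [heut.deriv_eq]
      simpa using hd.deriv
    rw [hderiv, hl x hx]
    generalize Real.sqrt (x ^ m / (x ^ m - 1)) = t
    generalize Real.sqrt ((x ^ m - 1) / x ^ m) = s
    push_cast
    have hxne : x ≠ 0 := ne_of_gt hx0
    field_simp
    ring
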